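/- Let R > 0 and δ > 1/(2R²). Let 𝔸, 𝔹, ℂ, 𝔻 : [R,∞) → ℝ be bounded functions with 𝔸 > 0, 𝔻 > 0, 𝔹 ≤ 0, ℂ ≤ 0, such that 𝔸(r)x² + (𝔹(r)+ℂ(r))xy + 𝔻(r)y² ≥ δ(x² + y²) for all r ∈ [R,∞) and all (x,y) ∈ ℝ². Let u, v : [R,∞) → ℝ be bounded C² functions with bounded first derivatives satisfying −Δ_r u + u/r² + 𝔸u + 𝔹v ≤ 0 and −Δ_r v + v/r² + ℂu + 𝔻v ≤ 0 on (R,∞), with u(R) ≤ 0, v(R) ≤ 0, and u(r), v(r) → 0 as r → ∞. Then u ≤ 0 and v ≤ 0 on [R,∞). -/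

import Mathlib

open Set Filter Topology


/-- The radial Laplacian `Δ_r u(r) = u''(r) + u'(r)/r`. -/
noncomputable def radLap (f : ℝ → ℝ) (r : ℝ) : ℝ := deriv (deriv f) r + deriv f r / r

/-- From C² at a point: differentiable nearby, and deriv has a derivative at the point. -/
lemma c2_facts (f : ℝ → ℝ) (x : ℝ) (hf : ContDiffAt ℝ 2 f x) :
    (∀ᶠ y in 𝓝 x, DifferentiableAt ℝ f y) ∧
      HasDerivAt (deriv f) (deriv (deriv f) x) x := by
  obtain ⟨s, hs, hcd⟩ := hf.contDiffOn le_rfl (by simp)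
  obtain ⟨t, hts, hto, hxt⟩ := mem_nhds_iff.mp hs
  have hcdt : ContDiffOn ℝ 2 f t := hcd.mono hts
  have hdiff : ∀ y ∈ t, DifferentiableAt ℝ f y := fun y hy =>
    ((hcdt.differentiableOn (by norm_num)) y hy).differentiableAt (hto.mem_nhds hy)
  have hdd : ContDiffOn ℝ 1 (deriv f) t := hcdt.deriv_of_isOpen hto (by norm_num)
  have hdd' : DifferentiableAt ℝ (deriv f) x :=
    ((hdd.differentiableOn (by norm_num)) x hxt).differentiableAt (hto.mem_nhds hxt)
  exact ⟨eventually_of_mem (hto.mem_nhds hxt) hdiff, hdd'.hasDerivAt⟩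

/-- Second derivative test at a local max. -/
lemma secondDeriv_nonpos_of_isLocalMax (f : ℝ → ℝ) (x : ℝ)
    (hf : ContDiffAt ℝ 2 f x) (hmax : IsLocalMax f x) :
    deriv f x = 0 ∧ deriv (deriv f) x ≤ 0 := by
  obtain ⟨hfd, hL⟩ := c2_facts f x hf
  have h0 : deriv f x = 0 := hmax.deriv_eq_zero
  refine ⟨h0, ?_⟩
  by_contra hpos
  push_neg at hpos
  have hslope : Tendsto (slope (deriv f) x) (𝓝[≠] x) (𝓝 (deriv (deriv f) x)) :=
    hasDerivAt_iff_tendsto_slope.1 hL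
  have hev : ∀ᶠ y in 𝓝[≠] x, 0 < slope (deriv f) x y :=
    hslope.eventually (eventually_gt_nhds hpos)
  have hev' : ∀ᶠ y in 𝓝[>] x, 0 < slope (deriv f) x y :=
    hev.filter_mono (nhdsWithin_mono x (fun y hy => ne_of_gt hy))
  have hev2 : ∀ᶠ y in 𝓝[>] x, 0 < deriv f y := by
    filter_upwards [hev', self_mem_nhdsWithin] with y hy hy'
    have hxy : (0:ℝ) < y - x := sub_pos.2 hy'
    rw [slope_def_field, div_eq_mul_inv] at hy
    nlinarith [mul_pos hy hxy, inv_pos.2 hxy, h0]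
  have hall : ∀ᶠ y in 𝓝[>] x,
      0 < deriv f y ∧ DifferentiableAt ℝ f y ∧ f y ≤ f x := by
    refine hev2.and (Eventually.filter_mono nhdsWithin_le_nhds ?_)
    exact hfd.and hmax
  obtain ⟨b, hb, hsub⟩ := mem_nhdsGT_iff_exists_Ioc_subset.1 hall
  have hb' : x < b := hb
  have hdiffIcc : ∀ y ∈ Icc x b, DifferentiableAt ℝ f y := by
    intro y hy
    rcases eq_or_lt_of_le hy.1 with rfl | hlt
    · exact hfd.self_of_nhds
    · exact (hsub ⟨hlt, hy.2⟩).2.1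
  have hmono : StrictMonoOn f (Icc x b) := by
    apply strictMonoOn_of_deriv_pos (convex_Icc x b)
    · exact fun y hy => (hdiffIcc y hy).continuousAt.continuousWithinAt
    · intro y hy
      rw [interior_Icc] at hy
      exact (hsub ⟨hy.1, hy.2.le⟩).1
  have h1 : f x < f b := hmono (left_mem_Icc.2 hb'.le) (right_mem_Icc.2 hb'.le) hb'
  have h2 : f b ≤ f x := (hsub ⟨hb', le_rfl⟩).2.2
  linarith

theorem stmt16 (R δ : ℝ) (hR : 0 < R) (hδ : 1 / (2 * R ^ 2) < δ)
    (A B C D : ℝ → ℝ)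
    (hbdd : ∃ M : ℝ, ∀ r ≥ R, |A r| ≤ M ∧ |B r| ≤ M ∧ |C r| ≤ M ∧ |D r| ≤ M)
    (hA : ∀ r ≥ R, 0 < A r) (hD : ∀ r ≥ R, 0 < D r)
    (hB : ∀ r ≥ R, B r ≤ 0) (hC : ∀ r ≥ R, C r ≤ 0)
    (hquad : ∀ r ≥ R, ∀ x y : ℝ,
      A r * x ^ 2 + (B r + C r) * x * y + D r * y ^ 2 ≥ δ * (x ^ 2 + y ^ 2))
    (u v : ℝ → ℝ)
    (hu : ContDiffOn ℝ 2 u (Set.Ici R)) (hv : ContDiffOn ℝ 2 v (Set.Ici R))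
    (huvbd : ∃ M : ℝ, ∀ r ≥ R,
      |u r| ≤ M ∧ |v r| ≤ M ∧ |deriv u r| ≤ M ∧ |deriv v r| ≤ M)
    (hineq1 : ∀ r ∈ Set.Ioi R, -(radLap u r) + u r / r ^ 2 + A r * u r + B r * v r ≤ 0)
    (hineq2 : ∀ r ∈ Set.Ioi R, -(radLap v r) + v r / r ^ 2 + C r * u r + D r * v r ≤ 0)
    (huR : u R ≤ 0) (hvR : v R ≤ 0)
    (hul : Filter.Tendsto u Filter.atTop (nhds 0))
    (hvl : Filter.Tendsto v Filter.atTop (nhds 0)) :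
    ∀ r ≥ R, u r ≤ 0 ∧ v r ≤ 0 := by
  by_contra hcon
  push_neg at hcon
  obtain ⟨r₁, hr₁R, hr₁⟩ := hcon
  have hδ0 : 0 < δ := lt_trans (by positivity) hδ
  set g : ℝ → ℝ := fun r => max (u r) 0 ^ 2 + max (v r) 0 ^ 2 with hg_def
  have hgcont : ContinuousOn g (Set.Ici R) :=
    ((hu.continuousOn.sup continuousOn_const).pow 2).add
      ((hv.continuousOn.sup continuousOn_const).pow 2)
  have hg1 : 0 < g r₁ := by
    rcases le_or_gt (u r₁) 0 with h | h
    · have hv1 := hr₁ h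
      have h1 : max (v r₁) 0 = v r₁ := max_eq_left hv1.le
      have h2 : (0:ℝ) ≤ max (u r₁) 0 ^ 2 := by positivity
      have h3 : 0 < v r₁ ^ 2 := by positivity
      simp only [hg_def]
      rw [h1]; linarith
    · have h1 : max (u r₁) 0 = u r₁ := max_eq_left h.le
      have h2 : (0:ℝ) ≤ max (v r₁) 0 ^ 2 := by positivity
      have h3 : 0 < u r₁ ^ 2 := by positivity
      simp only [hg_def]
      rw [h1]; linarith
  have hglim : Tendsto g atTop (𝓝 0) := by
    have h1 : Tendsto (fun r => max (u r) 0) atTop (𝓝 (max 0 0)) :=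
      hul.max tendsto_const_nhds
    have h2 : Tendsto (fun r => max (v r) 0) atTop (𝓝 (max 0 0)) :=
      hvl.max tendsto_const_nhds
    have := (h1.pow 2).add (h2.pow 2)
    simpa using this
  obtain ⟨T, hT⟩ := eventually_atTop.1 (hglim.eventually (eventually_lt_nhds hg1))
  set T' : ℝ := max T r₁ with hT'_def
  have hr₁mem : r₁ ∈ Icc R T' := ⟨hr₁R, le_max_right _ _⟩
  obtain ⟨r₀, hr₀mem, hr₀max⟩ :=
    isCompact_Icc.exists_isMaxOn ⟨r₁, hr₁mem⟩
      (hgcont.mono (fun x hx => hx.1))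
  have hgr₀ : 0 < g r₀ := lt_of_lt_of_le hg1 (hr₀max hr₁mem)
  have hglob : ∀ r, R ≤ r → g r ≤ g r₀ := by
    intro r hr
    rcases le_or_gt r T' with h | h
    · exact hr₀max ⟨hr, h⟩
    · have hTr : T ≤ r := le_trans (le_max_left _ _) h.le
      exact le_trans (hT r hTr).le (hr₀max hr₁mem)
  have hgR : g R = 0 := by
    simp only [hg_def]
    rw [max_eq_right huR, max_eq_right hvR]
    norm_num
  have hr₀R : R < r₀ := by
    rcases eq_or_lt_of_le hr₀mem.1 with h | h
    · rw [← h, hgR] at hgr₀; linarith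
    · exact h
  have hr₀pos : 0 < r₀ := hR.trans hr₀R
  have hr₀Ici : Ici R ∈ 𝓝 r₀ := Ici_mem_nhds hr₀R
  have hr₀Ioi : r₀ ∈ Ioi R := hr₀R
  have hcu : ContDiffAt ℝ 2 u r₀ := hu.contDiffAt hr₀Ici
  have hcv : ContDiffAt ℝ 2 v r₀ := hv.contDiffAt hr₀Ici
  have hr₀geR : R ≤ r₀ := hr₀R.le
  rcases le_or_gt (u r₀) 0 with hu0 | hu0 <;> rcases le_or_gt (v r₀) 0 with hv0 | hv0
  · -- both nonpositive: g r₀ = 0, contradiction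
    have : g r₀ = 0 := by
      simp only [hg_def]
      rw [max_eq_right hu0, max_eq_right hv0]
      norm_num
    linarith
  · -- u r₀ ≤ 0 < v r₀ : scalar max principle for v
    have hgr₀eq : g r₀ = v r₀ ^ 2 := by
      simp only [hg_def]
      rw [max_eq_right hu0, max_eq_left hv0.le]
      norm_num
    have vmax : ∀ r, R ≤ r → v r ≤ v r₀ := by
      intro r hr
      have h1 := hglob r hr
      rw [hgr₀eq] at h1
      simp only [hg_def] at h1
      have h2 : v r ≤ max (v r) 0 := le_max_left _ _
      have h3 : (0:ℝ) ≤ max (v r) 0 := le_max_right _ _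
      nlinarith [sq_nonneg (max (u r) 0)]
    have hlocmax : IsLocalMax v r₀ := by
      filter_upwards [hr₀Ici] with y hy using vmax y hy
    obtain ⟨hd1, hd2⟩ := secondDeriv_nonpos_of_isLocalMax v r₀ hcv hlocmax
    have hlap : radLap v r₀ ≤ 0 := by
      show deriv (deriv v) r₀ + deriv v r₀ / r₀ ≤ 0
      rw [hd1]
      simpa using hd2
    have hi := hineq2 r₀ hr₀Ioi
    have p1 : 0 < v r₀ / r₀ ^ 2 := div_pos hv0 (by positivity)
    have p2 : 0 < D r₀ * v r₀ := mul_pos (hD r₀ hr₀geR) hv0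
    have p3 : 0 ≤ C r₀ * u r₀ := mul_nonneg_of_nonpos_of_nonpos (hC r₀ hr₀geR) hu0
    linarith
  · -- v r₀ ≤ 0 < u r₀ : scalar max principle for u
    have hgr₀eq : g r₀ = u r₀ ^ 2 := by
      simp only [hg_def]
      rw [max_eq_right hv0, max_eq_left hu0.le]
      norm_num
    have umax : ∀ r, R ≤ r → u r ≤ u r₀ := by
      intro r hr
      have h1 := hglob r hr
      rw [hgr₀eq] at h1
      simp only [hg_def] at h1
      have h2 : u r ≤ max (u r) 0 := le_max_left _ _
      have h3 : (0:ℝ) ≤ max (u r) 0 := le_max_right _ _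
      nlinarith [sq_nonneg (max (v r) 0)]
    have hlocmax : IsLocalMax u r₀ := by
      filter_upwards [hr₀Ici] with y hy using umax y hy
    obtain ⟨hd1, hd2⟩ := secondDeriv_nonpos_of_isLocalMax u r₀ hcu hlocmax
    have hlap : radLap u r₀ ≤ 0 := by
      show deriv (deriv u) r₀ + deriv u r₀ / r₀ ≤ 0
      rw [hd1]
      simpa using hd2
    have hi := hineq1 r₀ hr₀Ioi
    have p1 : 0 < u r₀ / r₀ ^ 2 := div_pos hu0 (by positivity)
    have p2 : 0 < A r₀ * u r₀ := mul_pos (hA r₀ hr₀geR) hu0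
    have p3 : 0 ≤ B r₀ * v r₀ := mul_nonneg_of_nonpos_of_nonpos (hB r₀ hr₀geR) hv0
    linarith
  · -- both positive : use w = u² + v²
    obtain ⟨hud, huD⟩ := c2_facts u r₀ hcu
    obtain ⟨hvd, hvD⟩ := c2_facts v r₀ hcv
    have hu1 : HasDerivAt u (deriv u r₀) r₀ := hud.self_of_nhds.hasDerivAt
    have hv1 : HasDerivAt v (deriv v r₀) r₀ := hvd.self_of_nhds.hasDerivAt
    set w : ℝ → ℝ := fun r => u r ^ 2 + v r ^ 2 with hw_def
    have hcw : ContDiffAt ℝ 2 w r₀ := (hcu.pow 2).add (hcv.pow 2)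
    have hupos : ∀ᶠ y in 𝓝 r₀, 0 < u y :=
      hcu.continuousAt.preimage_mem_nhds (Ioi_mem_nhds hu0)
    have hvpos : ∀ᶠ y in 𝓝 r₀, 0 < v y :=
      hcv.continuousAt.preimage_mem_nhds (Ioi_mem_nhds hv0)
    have hlocmax : IsLocalMax w r₀ := by
      filter_upwards [hupos, hvpos, hr₀Ici] with y h1 h2 h3
      have hgy := hglob y h3
      simp only [hg_def] at hgy
      rw [max_eq_left h1.le, max_eq_left h2.le, max_eq_left hu0.le,
        max_eq_left hv0.le] at hgy
      exact hgy
    obtain ⟨hd1, hd2⟩ := secondDeriv_nonpos_of_isLocalMax w r₀ hcw hlocmax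
    have Hw : HasDerivAt w (2 * u r₀ * deriv u r₀ + 2 * v r₀ * deriv v r₀) r₀ := by
      have h1 := hu1.pow 2
      have h2 := hv1.pow 2
      convert h1.add h2 using 1
      · rfl
      · rfl
      · rfl
      push_cast
      ring
    have hsum0 : u r₀ * deriv u r₀ + v r₀ * deriv v r₀ = 0 := by
      have := Hw.deriv
      rw [hd1] at this
      linarith
    have hEq : deriv w =ᶠ[𝓝 r₀]
        fun y => 2 * u y * deriv u y + 2 * v y * deriv v y := by
      filter_upwards [hud, hvd] with y h1 h2
      have hder := ((h1.hasDerivAt.pow 2).add (h2.hasDerivAt.pow 2)).deriv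
      show deriv w y = _
      rw [hw_def]
      rw [show (fun r => u r ^ 2 + v r ^ 2) = u ^ 2 + v ^ 2 from rfl, hder]
      push_cast
      ring
    have HG : HasDerivAt (fun y => 2 * u y * deriv u y + 2 * v y * deriv v y)
        (2 * deriv u r₀ * deriv u r₀ + 2 * u r₀ * deriv (deriv u) r₀ +
          (2 * deriv v r₀ * deriv v r₀ + 2 * v r₀ * deriv (deriv v) r₀)) r₀ := by
      have a1 := (hu1.const_mul (2:ℝ)).mul huD
      have a2 := (hv1.const_mul (2:ℝ)).mul hvD
      convert a1.add a2 using 1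
      try ring
      all_goals rfl
    have hdd : deriv (deriv w) r₀ =
        2 * deriv u r₀ * deriv u r₀ + 2 * u r₀ * deriv (deriv u) r₀ +
          (2 * deriv v r₀ * deriv v r₀ + 2 * v r₀ * deriv (deriv v) r₀) :=
      (HG.congr_of_eventuallyEq hEq).deriv
    rw [hdd] at hd2
    have hi1 : u r₀ / r₀ ^ 2 + A r₀ * u r₀ + B r₀ * v r₀ ≤
        deriv (deriv u) r₀ + deriv u r₀ / r₀ := by
      have := hineq1 r₀ hr₀Ioi
      unfold radLap at this
      linarith
    have hi2 : v r₀ / r₀ ^ 2 + C r₀ * u r₀ + D r₀ * v r₀ ≤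
        deriv (deriv v) r₀ + deriv v r₀ / r₀ := by
      have := hineq2 r₀ hr₀Ioi
      unfold radLap at this
      linarith
    have m1 := mul_le_mul_of_nonneg_left hi1 hu0.le
    have m2 := mul_le_mul_of_nonneg_left hi2 hv0.le
    have hq := hquad r₀ hr₀geR (u r₀) (v r₀)
    have hsum0' : u r₀ * (deriv u r₀ / r₀) + v r₀ * (deriv v r₀ / r₀) = 0 := by
      have : (u r₀ * deriv u r₀ + v r₀ * deriv v r₀) / r₀ = 0 := by
        rw [hsum0]; simp
      field_simp at this ⊢
      linarith [this]
    have hdiveq : u r₀ * (u r₀ / r₀ ^ 2) + v r₀ * (v r₀ / r₀ ^ 2) =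
        (u r₀ ^ 2 + v r₀ ^ 2) / r₀ ^ 2 := by ring
    have hpos2 : 0 < (u r₀ ^ 2 + v r₀ ^ 2) / r₀ ^ 2 + δ * (u r₀ ^ 2 + v r₀ ^ 2) := by
      positivity
    linarith [m1, m2, hq, hd2, hsum0', hdiveq, hpos2,
      sq_nonneg (deriv u r₀), sq_nonneg (deriv v r₀)]
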